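/- arXiv:1204.5637 — 3 statements merged into one kernel-verified Lean document; each statement's English description precedes it below -/
import Mathlib

section
/- Let n ≥ 1 and let T₁, ..., Tₙ be independent identically distributed random variables with the exponential distribution of rate 1 (density e^{-x} on (0,∞)). Let Mₙ = max(T₁, ..., Tₙ). Then for every real s < 1, E[e^{s Mₙ}] = Γ(n+1) Γ(1-s)/Γ(n+1-s). -/
open MeasureTheory ProbabilityTheory Real Set
open scoped ENNReal

private lemma real_beta' {a b : ℝ} (ha : 0 < a) (hb : 0 < b) :
    ∫ x in Ioo (0:ℝ) 1, x ^ (a - 1) * (1 - x) ^ (b - 1) =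
      Gamma a * Gamma b / Gamma (a + b) := by
  have hbeta := Complex.Gamma_mul_Gamma_eq_betaIntegral
    (s := (a : ℂ)) (t := (b : ℂ)) (by simpa using ha) (by simpa using hb)
  have key : Complex.betaIntegral a b =
      ((∫ x in Ioo (0:ℝ) 1, x ^ (a - 1) * (1 - x) ^ (b - 1) : ℝ) : ℂ) := by
    rw [Complex.betaIntegral, intervalIntegral.integral_of_le zero_le_one,
      integral_Ioc_eq_integral_Ioo]
    calc ∫ t in Ioo (0:ℝ) 1, (t:ℂ) ^ ((a:ℂ) - 1) * (1 - (t:ℂ)) ^ ((b:ℂ) - 1)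
        = ∫ t in Ioo (0:ℝ) 1, ((t ^ (a - 1) * (1 - t) ^ (b - 1) : ℝ) : ℂ) := by
          refine setIntegral_congr_fun measurableSet_Ioo (fun x hx => ?_)
          obtain ⟨hx0, hx1⟩ := hx
          rw [Complex.ofReal_mul, Complex.ofReal_cpow hx0.le,
            Complex.ofReal_cpow (by linarith), Complex.ofReal_sub, Complex.ofReal_sub,
            Complex.ofReal_sub, Complex.ofReal_one]
      _ = _ := integral_ofReal
  rw [key] at hbeta
  rw [← Complex.ofReal_add, Complex.Gamma_ofReal, Complex.Gamma_ofReal,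
    Complex.Gamma_ofReal, ← Complex.ofReal_mul, ← Complex.ofReal_mul,
    Complex.ofReal_inj] at hbeta
  rw [hbeta, mul_div_cancel_left₀]
  exact (Real.Gamma_pos_of_pos (by positivity)).ne'

private lemma neg_log_image' : (fun u : ℝ => -Real.log u) '' Ioo 0 1 = Ioi 0 := by
  ext y
  constructor
  · rintro ⟨u, ⟨hu0, hu1⟩, rfl⟩
    simpa using Real.log_neg hu0 hu1
  · intro hy
    exact ⟨Real.exp (-y), ⟨Real.exp_pos _, by
      rw [Real.exp_lt_one_iff]; simpa using hy⟩, by simp [Real.log_exp]⟩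

private lemma subst_lemma' (n : ℕ) (hn : 1 ≤ n) (s : ℝ) :
    ∫ x in Ioi (0:ℝ), exp (s * x) * ((n : ℝ) * (1 - exp (-x)) ^ (n - 1) * exp (-x)) =
      (n : ℝ) * ∫ u in Ioo (0:ℝ) 1, u ^ ((1 - s) - 1) * (1 - u) ^ ((n : ℝ) - 1) := by
  have hderiv : ∀ u ∈ Ioo (0:ℝ) 1,
      HasDerivWithinAt (fun u : ℝ => -Real.log u) (-u⁻¹) (Ioo 0 1) u :=
    fun u hu => ((Real.hasDerivAt_log hu.1.ne').neg).hasDerivWithinAt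
  have hinj : InjOn (fun u : ℝ => -Real.log u) (Ioo 0 1) := by
    intro a ha b hb h
    exact Real.log_injOn_pos (mem_Ioi.mpr ha.1) (mem_Ioi.mpr hb.1) (neg_injective h)
  rw [← neg_log_image',
    integral_image_eq_integral_abs_deriv_smul measurableSet_Ioo hderiv hinj,
    ← MeasureTheory.integral_const_mul]
  refine setIntegral_congr_fun measurableSet_Ioo (fun u hu => ?_)
  obtain ⟨hu0, hu1⟩ := hu
  have h1 : Real.exp (-(-Real.log u)) = u := by rw [neg_neg, Real.exp_log hu0]
  have h2 : Real.exp (s * -Real.log u) = u ^ (-s) := by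
    rw [Real.rpow_def_of_pos hu0]; ring_nf
  have h3 : ((1:ℝ) - u) ^ (n - 1) = (1 - u) ^ ((n:ℝ) - 1) := by
    rw [show (n:ℝ) - 1 = ((n - 1 : ℕ) : ℝ) by push_cast [Nat.cast_sub hn]; ring,
      Real.rpow_natCast]
  rw [smul_eq_mul, h1, h2, h3, abs_neg, abs_of_nonneg (by positivity : (0:ℝ) ≤ u⁻¹),
    show (1:ℝ) - s - 1 = -s by ring]
  field_simp

private lemma cont_g' (n : ℕ) :
    Continuous (fun t : ℝ => (n : ℝ) * (1 - exp (-t)) ^ (n - 1) * exp (-t)) := by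
  continuity

private lemma deriv_g' (n : ℕ) (t : ℝ) :
    HasDerivAt (fun t : ℝ => (1 - exp (-t)) ^ n)
      ((n : ℝ) * (1 - exp (-t)) ^ (n - 1) * exp (-t)) t := by
  have h0 : HasDerivAt (fun t : ℝ => 1 - exp (-t)) (exp (-t)) t := by
    simpa using ((hasDerivAt_neg t).exp).const_sub 1
  simpa [mul_comm, mul_assoc, mul_left_comm] using h0.fun_pow n

private lemma lint_dens' (n : ℕ) (hn : 1 ≤ n) (x : ℝ) :
    ∫⁻ y in Iic x, (Ioi (0:ℝ)).indicator
      (fun t => ENNReal.ofReal ((n : ℝ) * (1 - exp (-t)) ^ (n - 1) * exp (-t))) y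
      = ENNReal.ofReal ((if 0 ≤ x then 1 - exp (-x) else 0) ^ n) := by
  rw [lintegral_indicator measurableSet_Ioi, Measure.restrict_restrict measurableSet_Ioi]
  have hIoc : Ioi (0:ℝ) ∩ Iic x = Ioc 0 x := by ext t; simp [mem_Ioc, and_comm]
  rw [hIoc]
  by_cases hx : 0 ≤ x
  · rw [if_pos hx]
    have hint : IntegrableOn (fun t : ℝ => (n : ℝ) * (1 - exp (-t)) ^ (n - 1) * exp (-t))
        (Ioc 0 x) := (cont_g' n).integrableOn_Ioc
    have hnn : 0 ≤ᵐ[volume.restrict (Ioc (0:ℝ) x)]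
        (fun t : ℝ => (n : ℝ) * (1 - exp (-t)) ^ (n - 1) * exp (-t)) := by
      refine (ae_restrict_iff' measurableSet_Ioc).2 (ae_of_all _ fun t ht => ?_)
      have h1 : exp (-t) ≤ 1 := by rw [Real.exp_le_one_iff]; linarith [ht.1]
      have h2 : (0:ℝ) ≤ 1 - exp (-t) := by linarith
      positivity
    rw [← ofReal_integral_eq_lintegral_ofReal hint hnn]
    congr 1
    rw [← intervalIntegral.integral_of_le hx,
      intervalIntegral.integral_eq_sub_of_hasDerivAt (fun t _ => deriv_g' n t)
        ((cont_g' n).intervalIntegrable 0 x)]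
    simp [zero_pow (by omega : n ≠ 0)]
  · rw [if_neg hx, Ioc_eq_empty (by linarith), Measure.restrict_empty, lintegral_zero_measure,
      zero_pow (by omega : n ≠ 0), ENNReal.ofReal_zero]

/-- If `T₁, …, Tₙ` are i.i.d. `Exp(1)` random variables (`n ≥ 1`) and
`Mₙ = max(T₁, …, Tₙ)`, then for every real `s < 1`,
`E[e^(s Mₙ)] = Γ(n+1) Γ(1-s) / Γ(n+1-s)`. -/
theorem mgf_max_exponential {Ω : Type*} [MeasurableSpace Ω] (μ : Measure Ω)
    [IsProbabilityMeasure μ]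
    (n : ℕ) (hn : 1 ≤ n)
    (T : Fin n → Ω → ℝ) (hT : ∀ i, Measurable (T i))
    (hlaw : ∀ i, Measure.map (T i) μ = expMeasure 1)
    (hindep : iIndepFun T μ)
    (s : ℝ) (hs : s < 1) :
    ∫ ω, Real.exp (s * Finset.univ.sup' (Finset.univ_nonempty_iff.mpr ⟨⟨0, hn⟩⟩)
        (fun i => T i ω)) ∂μ =
      Gamma ((n : ℝ) + 1) * Gamma (1 - s) / Gamma ((n : ℝ) + 1 - s) := by
  have hne : (Finset.univ : Finset (Fin n)).Nonempty := Finset.univ_nonempty_iff.mpr ⟨⟨0, hn⟩⟩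
  set M : Ω → ℝ := fun ω => Finset.univ.sup' hne (fun i => T i ω) with hM
  have hMmeas : Measurable M := by
    have h1 : M = Finset.univ.sup' hne T := by
      ext ω; rw [hM, Finset.sup'_apply]
    rw [h1]
    exact Finset.measurable_sup' hne (fun i _ => hT i)
  -- density function
  set f : ℝ → ℝ≥0∞ := (Ioi (0:ℝ)).indicator
    (fun t => ENNReal.ofReal ((n : ℝ) * (1 - exp (-t)) ^ (n - 1) * exp (-t))) with hf
  have hfmeas : Measurable f :=
    Measurable.indicator ((cont_g' n).measurable.ennreal_ofReal) measurableSet_Ioi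
  -- the law of M
  have hlawM : μ.map M = volume.withDensity f := by
    haveI : IsProbabilityMeasure (μ.map M) := Measure.isProbabilityMeasure_map hMmeas.aemeasurable
    refine Measure.ext_of_Iic (μ.map M) _ (fun x => ?_)
    have hpre : M ⁻¹' Iic x = ⋂ i ∈ (Finset.univ : Finset (Fin n)), T i ⁻¹' Iic x := by
      ext ω
      simp [hM, Finset.sup'_le_iff]
    have hEi : ∀ i : Fin n, μ (T i ⁻¹' Iic x)
        = ENNReal.ofReal (if 0 ≤ x then 1 - exp (-x) else 0) := by
      intro i
      have := Measure.map_apply (μ := μ) (hT i) (measurableSet_Iic (a := x))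
      rw [hlaw i] at this
      rw [← this, expMeasure, gammaMeasure, withDensity_apply _ measurableSet_Iic,
        show gammaPDF 1 1 = exponentialPDF 1 from rfl,
        lintegral_exponentialPDF_eq_antiDeriv one_pos x]
      simp
    rw [Measure.map_apply hMmeas measurableSet_Iic, hpre,
      hindep.measure_inter_preimage_eq_mul Finset.univ (fun _ _ => measurableSet_Iic)]
    simp_rw [hEi]
    have hc : 0 ≤ (if 0 ≤ x then 1 - exp (-x) else 0) := by
      split_ifs with h
      · have h1 : exp (-x) ≤ 1 := by rw [Real.exp_le_one_iff]; linarith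
        linarith
      · exact le_rfl
    rw [Finset.prod_const, Finset.card_univ, Fintype.card_fin, ← ENNReal.ofReal_pow hc,
      withDensity_apply _ measurableSet_Iic, hf, lint_dens' n hn x]
  -- notation for the real density
  set g : ℝ → ℝ := fun t => (n : ℝ) * (1 - exp (-t)) ^ (n - 1) * exp (-t) with hg
  have hgnn : ∀ t : ℝ, 0 < t → 0 ≤ g t := by
    intro t ht
    have h1 : exp (-t) ≤ 1 := by rw [Real.exp_le_one_iff]; linarith
    have h2 : (0:ℝ) ≤ 1 - exp (-t) := by linarith
    rw [hg]; positivity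
  have hcont : Continuous fun x : ℝ => exp (s * x) := by continuity
  have hh : Continuous fun x : ℝ => exp (s * x) * g x := hcont.mul (cont_g' n)
  -- integrability of the real integrand on Ioi 0
  have hI : IntegrableOn (fun x : ℝ => exp (s * x) * g x) (Ioi 0) := by
    have hmaj : IntegrableOn (fun x : ℝ => (n : ℝ) * exp (-(1 - s) * x)) (Ioi 0) :=
      (exp_neg_integrableOn_Ioi 0 (by linarith : (0:ℝ) < 1 - s)).const_mul _
    refine Integrable.mono' hmaj hh.aestronglyMeasurable ?_
    refine (ae_restrict_iff' measurableSet_Ioi).2 (ae_of_all _ fun x hx => ?_)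
    have hx0 : (0:ℝ) < x := hx
    have h1 : exp (-x) ≤ 1 := by rw [Real.exp_le_one_iff]; linarith
    have h2 : (0:ℝ) ≤ 1 - exp (-x) := by linarith
    have h3 : (1 - exp (-x)) ^ (n - 1) ≤ 1 := pow_le_one₀ h2 (by linarith [Real.exp_pos (-x)])
    have h4 : exp (s * x) * exp (-x) = exp (-(1 - s) * x) := by
      rw [← Real.exp_add]; ring_nf
    rw [Real.norm_eq_abs, abs_of_nonneg (by positivity : (0:ℝ) ≤ exp (s*x) * g x)]
    calc exp (s * x) * g x = (1 - exp (-x)) ^ (n - 1) * ((n:ℝ) * (exp (s*x) * exp (-x))) := by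
          rw [hg]; ring
      _ ≤ 1 * ((n:ℝ) * (exp (s*x) * exp (-x))) := by
          refine mul_le_mul_of_nonneg_right h3 (by positivity)
      _ = (n:ℝ) * exp (-(1 - s) * x) := by rw [h4]; ring
  have hnnI : 0 ≤ᵐ[volume.restrict (Ioi (0:ℝ))] fun x : ℝ => exp (s * x) * g x := by
    refine (ae_restrict_iff' measurableSet_Ioi).2 (ae_of_all _ fun x hx => ?_)
    exact mul_nonneg (exp_pos _).le (hgnn x hx)
  -- main calculation
  calc ∫ ω, exp (s * M ω) ∂μ
      = ∫ x, exp (s * x) ∂(μ.map M) :=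
        (integral_map hMmeas.aemeasurable hcont.aestronglyMeasurable).symm
    _ = ∫ x, exp (s * x) ∂(volume.withDensity f) := by rw [hlawM]
    _ = (∫⁻ x, ENNReal.ofReal (exp (s * x)) ∂(volume.withDensity f)).toReal := by
        rw [integral_eq_lintegral_of_nonneg_ae (ae_of_all _ fun x => (exp_pos _).le)
          hcont.aestronglyMeasurable]
    _ = (∫⁻ x, f x * ENNReal.ofReal (exp (s * x)) ∂volume).toReal := by
        rw [lintegral_withDensity_eq_lintegral_mul _ hfmeas
          (hcont.measurable.ennreal_ofReal)]
        rfl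
    _ = (∫⁻ x, (Ioi (0:ℝ)).indicator
          (fun t => ENNReal.ofReal (exp (s * t) * g t)) x ∂volume).toReal := by
        congr 1
        refine lintegral_congr fun x => ?_
        by_cases hx : x ∈ Ioi (0:ℝ)
        · rw [hf, Set.indicator_of_mem hx, Set.indicator_of_mem hx,
            ENNReal.ofReal_mul (exp_pos _).le, mul_comm]
        · rw [hf, Set.indicator_of_notMem hx, Set.indicator_of_notMem hx, zero_mul]
    _ = (∫⁻ x in Ioi (0:ℝ), ENNReal.ofReal (exp (s * x) * g x) ∂volume).toReal := by
        rw [lintegral_indicator measurableSet_Ioi]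
    _ = ∫ x in Ioi (0:ℝ), exp (s * x) * g x := by
        rw [← ofReal_integral_eq_lintegral_ofReal hI hnnI,
          ENNReal.toReal_ofReal (integral_nonneg_of_ae hnnI)]
    _ = (n : ℝ) * ∫ u in Ioo (0:ℝ) 1, u ^ ((1 - s) - 1) * (1 - u) ^ ((n : ℝ) - 1) :=
        subst_lemma' n hn s
    _ = (n : ℝ) * (Gamma (1 - s) * Gamma n / Gamma ((1 - s) + n)) := by
        rw [real_beta' (by linarith : (0:ℝ) < 1 - s)
          (by exact_mod_cast Nat.pos_of_ne_zero (by omega) : (0:ℝ) < (n:ℝ))]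
    _ = Gamma ((n : ℝ) + 1) * Gamma (1 - s) / Gamma ((n : ℝ) + 1 - s) := by
        rw [Real.Gamma_add_one (by exact_mod_cast (by omega : n ≠ 0) : (n:ℝ) ≠ 0),
          show (1:ℝ) - s + n = (n:ℝ) + 1 - s by ring]
        ring
end

section
/- Let m ≥ 1 be a fixed integer, let T₁, T₂, ... be independent identically distributed random variables with the exponential distribution of rate 1, and let Mₙ^{(m)} denote the m-th largest value among T₁, ..., Tₙ (for n ≥ m). Then for every real x, P(Mₙ^{(m)} - log n ≤ x) → P(G_m ≥ e^{-x}) as n → ∞, where G_m has the Gamma(m) distribution; that is, Mₙ^{(m)} - log n converges in distribution to -log(G_m). -/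
open MeasureTheory ProbabilityTheory Real Filter Topology
open scoped ENNReal NNReal

/-- The `m`-th largest of the values `x 0, …, x (n-1)` (1-indexed: `m = 1` gives the
maximum): the `m`-th element of the list sorted in decreasing order. -/
noncomputable def kthLargest {n : ℕ} (x : Fin n → ℝ) (m : ℕ) : ℝ :=
  ((List.ofFn x).insertionSort (· ≥ ·)).getD (m - 1) 0

section Aux

lemma sorted_getElem_le_iff' {l : List ℝ} (hs : l.Pairwise (· ≥ ·)) {k : ℕ} (hk : k < l.length)
    {y : ℝ} : l[k] ≤ y ↔ l.countP (fun a => decide (y < a)) ≤ k := by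
  constructor
  · intro h
    have hsplit : l.countP (fun a => decide (y < a)) =
        (l.take k).countP (fun a => decide (y < a)) +
        (l.drop k).countP (fun a => decide (y < a)) := by
      rw [← List.countP_append, List.take_append_drop]
    have hdrop : (l.drop k).countP (fun a => decide (y < a)) = 0 := by
      rw [List.countP_eq_zero]
      intro a ha
      obtain ⟨j, hj, rfl⟩ := List.mem_iff_getElem.mp ha
      have hkj : k + j < l.length := by
        rw [List.length_drop] at hj; omega
      rw [List.getElem_drop]
      have : l[k] ≥ l[k + j] := hs.rel_get_of_le (a := ⟨k, hk⟩)
        (b := ⟨k + j, hkj⟩) (by simp)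
      simpa using not_lt.mpr (le_trans this h)
    have h1 : (l.take k).countP (fun a => decide (y < a)) ≤ (l.take k).length :=
      List.countP_le_length
    have h2 : (l.take k).length ≤ k := by simp [List.length_take]
    omega
  · intro h
    by_contra hlt
    push_neg at hlt
    have hall : ∀ a ∈ l.take (k+1), (fun a => decide (y < a)) a = true := by
      intro a ha
      obtain ⟨j, hj, rfl⟩ := List.mem_iff_getElem.mp ha
      rw [List.getElem_take]
      have hjk : j ≤ k := by
        simp [List.length_take] at hj; omega
      have : l[j] ≥ l[k] := hs.rel_get_of_le (a := ⟨j, lt_of_le_of_lt hjk hk⟩)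
        (b := ⟨k, hk⟩) (by simpa)
      simpa using lt_of_lt_of_le hlt this
    have hlen : (l.take (k+1)).length = k + 1 := by
      simp [List.length_take]; omega
    have : k + 1 ≤ l.countP (fun a => decide (y < a)) := by
      calc k + 1 = (l.take (k+1)).countP (fun a => decide (y < a)) := by
            rw [List.countP_eq_length.mpr hall, hlen]
        _ ≤ l.countP (fun a => decide (y < a)) := (List.take_sublist _ _).countP_le
    omega

lemma countP_ofFn' {n : ℕ} (x : Fin n → ℝ) (q : ℝ → Prop) [DecidablePred q] :
    (List.ofFn x).countP (fun a => decide (q a)) =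
      (Finset.univ.filter fun i => q (x i)).card := by
  induction n with
  | zero => simp
  | succ n ih =>
    rw [List.ofFn_succ, List.countP_cons, ih (fun i => x i.succ)]
    rw [Finset.card_filter, Finset.card_filter, Fin.sum_univ_succ]
    simp [add_comm]

lemma kthLargest_le_iff {n m : ℕ} (hm : 1 ≤ m) (hmn : m ≤ n) (x : Fin n → ℝ) (y : ℝ) :
    kthLargest x m ≤ y ↔ (Finset.univ.filter fun i => y < x i).card ≤ m - 1 := by
  set l := (List.ofFn x).insertionSort (· ≥ ·) with hl
  have hlen : l.length = n := by simp [hl]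
  have hk : m - 1 < l.length := by omega
  have hget : kthLargest x m = l[m-1] := by
    rw [kthLargest, ← hl, List.getD_eq_getElem?_getD, List.getElem?_eq_getElem hk]
    rfl
  have hsorted : l.Pairwise (· ≥ ·) := List.pairwise_insertionSort _ _
  rw [hget, sorted_getElem_le_iff' hsorted hk,
    (List.perm_insertionSort _ _).countP_eq, countP_ofFn' x (fun a => y < a)]

lemma expMeasure_Ioi {y : ℝ} (hy : 0 ≤ y) :
    expMeasure 1 (Set.Ioi y) = ENNReal.ofReal (Real.exp (-y)) := by
  have hprob : IsProbabilityMeasure (expMeasure 1) := isProbabilityMeasure_expMeasure one_pos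
  have hIic : expMeasure 1 (Set.Iic y) = ENNReal.ofReal (1 - Real.exp (-y)) := by
    have : expMeasure 1 (Set.Iic y) = ∫⁻ a in Set.Iic y, exponentialPDF 1 a := by
      rw [expMeasure, gammaMeasure, withDensity_apply _ measurableSet_Iic]
      rfl
    rw [this, lintegral_exponentialPDF_eq_antiDeriv one_pos, if_pos hy, one_mul]
  have : Set.Ioi y = (Set.Iic y)ᶜ := by simp
  rw [this, prob_compl_eq_one_sub measurableSet_Iic, hIic,
    ← ENNReal.ofReal_one,
    ← ENNReal.ofReal_sub _ (sub_nonneg.mpr (Real.exp_le_one_iff.mpr (neg_nonpos.mpr hy)))]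
  norm_num

variable {Ω : Type*} [MeasurableSpace Ω] {μ : Measure Ω} [IsProbabilityMeasure μ]

lemma meas_count_eq
    (T : ℕ → Ω → ℝ) (hT : ∀ i, Measurable (T i))
    (hindep : iIndepFun T μ)
    {p : ℝ≥0∞} (y : ℝ) (hp : ∀ i, μ (T i ⁻¹' Set.Ioi y) = p)
    (n k : ℕ) :
    μ {ω | ((Finset.range n).filter fun i => y < T i ω).card = k}
      = (n.choose k : ℝ≥0∞) * p ^ k * (1 - p) ^ (n - k) := by
  classical
  have hq : ∀ i, μ (T i ⁻¹' Set.Iic y) = 1 - p := by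
    intro i
    have h2 : T i ⁻¹' Set.Iic y = (T i ⁻¹' Set.Ioi y)ᶜ := by
      rw [← Set.preimage_compl, Set.compl_Ioi]
    rw [h2, prob_compl_eq_one_sub ((hT i) measurableSet_Ioi), hp i]
  have key : ∀ S : Finset ℕ, S ⊆ Finset.range n →
      {ω | (Finset.range n).filter (fun i => y < T i ω) = S}
        = ⋂ i ∈ Finset.range n, T i ⁻¹' (if i ∈ S then Set.Ioi y else Set.Iic y) := by
    intro S hS
    ext ω
    simp only [Set.mem_setOf_eq, Set.mem_iInter, Set.mem_preimage]
    constructor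
    · intro h i hi
      by_cases hiS : i ∈ S
      · rw [if_pos hiS]
        rw [← h, Finset.mem_filter] at hiS
        exact hiS.2
      · rw [if_neg hiS]
        rw [← h, Finset.mem_filter] at hiS
        push_neg at hiS
        exact Set.mem_Iic.mpr (hiS hi)
    · intro h
      ext i
      simp only [Finset.mem_filter]
      constructor
      · rintro ⟨hi, hyi⟩
        by_contra hiS
        have h3 := h i hi
        rw [if_neg hiS] at h3
        exact absurd hyi (not_lt.mpr h3)
      · intro hiS
        refine ⟨hS hiS, ?_⟩
        have h3 := h i (hS hiS)
        rwa [if_pos hiS] at h3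
  have hmeasE : ∀ S : Finset ℕ, S ⊆ Finset.range n →
      μ {ω | (Finset.range n).filter (fun i => y < T i ω) = S}
        = p ^ S.card * (1 - p) ^ (n - S.card) := by
    intro S hS
    rw [key S hS]
    rw [hindep.measure_inter_preimage_eq_mul (Finset.range n)
      (sets := fun i => if i ∈ S then Set.Ioi y else Set.Iic y)
      (fun i _ => by split_ifs <;>
        [exact measurableSet_Ioi; exact measurableSet_Iic])]
    have hprod : ∏ i ∈ Finset.range n,
        μ (T i ⁻¹' (if i ∈ S then Set.Ioi y else Set.Iic y))
        = (1-p) ^ (Finset.range n \ S).card * p ^ S.card := by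
      rw [← Finset.prod_sdiff hS]
      congr 1
      · rw [Finset.prod_congr rfl (fun i hi => ?_), Finset.prod_const]
        rw [if_neg (Finset.mem_sdiff.mp hi).2, hq i]
      · rw [Finset.prod_congr rfl (fun i hi => ?_), Finset.prod_const]
        rw [if_pos hi, hp i]
    rw [hprod, Finset.card_sdiff_of_subset hS, Finset.card_range, mul_comm]
  have hmeasSet : ∀ S : Finset ℕ, S ⊆ Finset.range n →
      MeasurableSet {ω | (Finset.range n).filter (fun i => y < T i ω) = S} := by
    intro S hS
    rw [key S hS]
    exact MeasurableSet.biInter (Finset.range n).countable_toSet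
      (fun i _ => (hT i) (by split_ifs <;> [exact measurableSet_Ioi; exact measurableSet_Iic]))
  have hunion : {ω | ((Finset.range n).filter fun i => y < T i ω).card = k}
      = ⋃ S ∈ (Finset.range n).powersetCard k,
          {ω | (Finset.range n).filter (fun i => y < T i ω) = S} := by
    ext ω
    simp only [Set.mem_setOf_eq, Set.mem_iUnion, Finset.mem_powersetCard]
    constructor
    · intro h
      exact ⟨_, ⟨Finset.filter_subset _ _, h⟩, rfl⟩
    · rintro ⟨S, ⟨-, hcard⟩, hfS⟩
      rw [hfS, hcard]
  rw [hunion, measure_biUnion_finset ?_ (fun S hS =>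
      hmeasSet S (Finset.mem_powersetCard.mp hS).1)]
  · rw [Finset.sum_congr rfl (fun S hS => ?_)]
    · rw [Finset.sum_const, Finset.card_powersetCard, Finset.card_range, nsmul_eq_mul,
        mul_assoc]
    · obtain ⟨hsub, hcard⟩ := Finset.mem_powersetCard.mp hS
      rw [hmeasE S hsub, hcard]
  · intro S hS S' hS' hne
    refine Set.disjoint_left.mpr (fun ω hω hω' => hne ?_)
    simp only [Set.mem_setOf_eq] at hω hω'
    rw [← hω, ← hω']

lemma sum_deriv_aux (x : ℝ) (m : ℕ) (hm : 1 ≤ m) :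
    ∑ j ∈ Finset.range m, (x^j / j.factorial - j * x^(j-1) / j.factorial)
      = x^(m-1) / (m-1).factorial := by
  induction m with
  | zero => omega
  | succ m ih =>
    by_cases hm0 : m = 0
    · subst hm0; simp
    · have h1 : 1 ≤ m := by omega
      rw [Finset.sum_range_succ, ih h1]
      have hfac : (m.factorial : ℝ) = m * (m-1).factorial := by
        rw [← Nat.mul_factorial_pred (by omega)]; push_cast; ring
      have hmne : (m:ℝ) ≠ 0 := Nat.cast_ne_zero.mpr hm0
      have hne : ((m-1).factorial : ℝ) ≠ 0 := by positivity
      have key : (m:ℝ) * x^(m-1) / m.factorial = x^(m-1)/(m-1).factorial := by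
        rw [hfac]; field_simp
      simp only [Nat.add_sub_cancel]
      rw [key]; ring

lemma gamma_tail (m : ℕ) (hm : 1 ≤ m) {lam : ℝ} (hlam : 0 < lam) :
    (gammaMeasure (m:ℝ) 1 (Set.Ici lam)).toReal
      = ∑ k ∈ Finset.range m, Real.exp (-lam) * lam ^ k / k.factorial := by
  set F : ℝ → ℝ := fun x => ∑ j ∈ Finset.range m, x^j * Real.exp (-x) / j.factorial with hF
  set f : ℝ → ℝ := fun x => x^(m-1) * Real.exp (-x) / (m-1).factorial with hf
  have hderiv : ∀ x : ℝ, HasDerivAt (fun x => -F x) (f x) x := by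
    intro x
    have hterm : ∀ j ∈ Finset.range m, HasDerivAt (fun x => x^j * Real.exp (-x) / j.factorial)
        ((j * x^(j-1) * Real.exp (-x) + x^j * (Real.exp (-x) * (-1))) / j.factorial) x := by
      intro j _
      exact ((hasDerivAt_pow j x).mul ((hasDerivAt_neg x).exp)).div_const _
    have hsum := HasDerivAt.fun_sum hterm
    have hd2 : HasDerivAt (fun x => -F x) _ x := hsum.fun_neg
    convert hd2 using 1
    show x ^ (m - 1) * Real.exp (-x) / (m-1).factorial = _
    have htel : x^(m-1) * Real.exp (-x) / (m-1).factorial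
        = (∑ j ∈ Finset.range m, (x^j / j.factorial - j * x^(j-1) / j.factorial))
          * Real.exp (-x) := by
      rw [sum_deriv_aux x m hm]; ring
    rw [htel, Finset.sum_mul, ← Finset.sum_neg_distrib]
    refine Finset.sum_congr rfl (fun j _ => ?_)
    ring
  have hlim : Tendsto (fun x => -F x) atTop (𝓝 0) := by
    have : Tendsto F atTop (𝓝 (∑ j ∈ Finset.range m, 0)) := by
      refine tendsto_finset_sum _ (fun j _ => ?_)
      have := (tendsto_pow_mul_exp_neg_atTop_nhds_zero j).div_const (j.factorial : ℝ)
      simpa using this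
    simpa using this.neg
  have hpos : ∀ x ∈ Set.Ioi lam, 0 ≤ f x := by
    intro x hx
    have hx0 : 0 < x := lt_trans hlam hx
    rw [hf]; positivity
  have hint : IntegrableOn f (Set.Ioi lam) :=
    integrableOn_Ioi_deriv_of_nonneg' (fun x _ => hderiv x) hpos hlim
  have hval : ∫ x in Set.Ioi lam, f x = F lam := by
    rw [integral_Ioi_of_hasDerivAt_of_tendsto' (fun x _ => hderiv x) hint hlim]
    simp
  rw [gammaMeasure, withDensity_apply _ measurableSet_Ici,
    Measure.restrict_congr_set Ioi_ae_eq_Ici.symm]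
  have hpdf : ∀ x ∈ Set.Ioi lam, gammaPDF (m:ℝ) 1 x = ENNReal.ofReal (f x) := by
    intro x hx
    have hx0 : 0 ≤ x := (lt_trans hlam hx).le
    rw [gammaPDF_of_nonneg hx0]
    congr 1
    have hcast : (m:ℝ) - 1 = ((m-1 : ℕ) : ℝ) := by
      rw [Nat.cast_sub hm]; norm_num
    have hGamma : Real.Gamma (m:ℝ) = (m-1).factorial := by
      have h2 : (m:ℝ) = ((m-1:ℕ):ℝ) + 1 := by rw [Nat.cast_sub hm]; ring
      rw [h2, Real.Gamma_nat_eq_factorial]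
    rw [Real.one_rpow, one_mul, hcast, Real.rpow_natCast, hGamma, hf]
    ring
  rw [setLIntegral_congr_fun measurableSet_Ioi hpdf]
  rw [← ofReal_integral_eq_lintegral_ofReal hint
    ((ae_restrict_iff' measurableSet_Ioi).mpr (ae_of_all _ hpos))]
  rw [hval, ENNReal.toReal_ofReal (by rw [hF]; positivity), hF]
  refine Finset.sum_congr rfl (fun j _ => ?_)
  ring

lemma cast_descFactorial_eq (n k : ℕ) (hk : k ≤ n) :
    (n.descFactorial k : ℝ) = ∏ i ∈ Finset.range k, ((n:ℝ) - i) := by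
  induction k with
  | zero => simp
  | succ k ih =>
    rw [Nat.descFactorial_succ, Finset.prod_range_succ, ← ih (by omega)]
    push_cast [Nat.cast_sub (by omega : k ≤ n)]
    ring

lemma binom_term_tendsto (k : ℕ) {lam : ℝ} (hlam : 0 < lam) :
    Tendsto (fun n : ℕ => (n.choose k : ℝ) * (lam/n)^k * (1-lam/n)^(n-k))
      atTop (𝓝 (Real.exp (-lam) * lam^k / k.factorial)) := by
  have hfacne : (k.factorial : ℝ) ≠ 0 := by positivity
  have hlimh : Tendsto (fun n : ℕ =>
      (lam^k / k.factorial) * (∏ i ∈ Finset.range k, (1 - (i:ℝ)/n)) *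
        ((1 + (-lam)/n)^n / (1 - lam/n)^k)) atTop
      (𝓝 ((lam^k / k.factorial) * (∏ i ∈ Finset.range k, (1:ℝ)) *
        (Real.exp (-lam) / (1:ℝ)^k))) := by
    refine Tendsto.mul (Tendsto.mul tendsto_const_nhds ?_) (Tendsto.div ?_ ?_ (by norm_num))
    · exact tendsto_finset_prod _ (fun i _ => by
        simpa using tendsto_const_nhds.sub (tendsto_const_div_atTop_nhds_zero_nat (i:ℝ)))
    · exact Real.tendsto_one_add_div_pow_exp (-lam)
    · exact Tendsto.pow (by
        simpa using tendsto_const_nhds.sub (tendsto_const_div_atTop_nhds_zero_nat lam)) k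
  have hval : (lam^k / k.factorial) * (∏ i ∈ Finset.range k, (1:ℝ)) *
      (Real.exp (-lam) / (1:ℝ)^k) = Real.exp (-lam) * lam^k / k.factorial := by
    simp [Finset.prod_const_one]
    ring
  rw [hval] at hlimh
  refine Tendsto.congr' ?_ hlimh
  filter_upwards [eventually_ge_atTop (k+1), eventually_gt_atTop ⌈lam⌉₊] with n hn1 hn2
  have hn0 : (0:ℝ) < n := by
    have : 0 < n := by omega
    exact_mod_cast this
  have hlamn : lam < n := by
    calc lam ≤ ⌈lam⌉₊ := Nat.le_ceil lam
      _ < n := by exact_mod_cast hn2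
  have hc1 : lam / n < 1 := (div_lt_one hn0).mpr hlamn
  have hne : (1:ℝ) - lam/n ≠ 0 := by linarith
  have hpow : ((1:ℝ) - lam/n)^(n-k) = (1-lam/n)^n / (1-lam/n)^k := by
    rw [eq_div_iff (pow_ne_zero _ hne), ← pow_add]
    congr 1
    omega
  have hprod : ∏ i ∈ Finset.range k, (1 - (i:ℝ)/n)
      = (∏ i ∈ Finset.range k, ((n:ℝ)-i)) / n^k := by
    have hcg : ∏ i ∈ Finset.range k, (1 - (i:ℝ)/n) = ∏ i ∈ Finset.range k, ((n:ℝ)-i)/n :=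
      Finset.prod_congr rfl (fun i _ => by field_simp)
    rw [hcg, Finset.prod_div_distrib, Finset.prod_const, Finset.card_range]
  have hchoose : (n.choose k : ℝ) = (∏ i ∈ Finset.range k, ((n:ℝ) - i)) / k.factorial := by
    have h2 : ((n.descFactorial k : ℕ) : ℝ) = (k.factorial:ℝ) * n.choose k := by
      exact_mod_cast congrArg (Nat.cast (R:=ℝ)) (Nat.descFactorial_eq_factorial_mul_choose n k)
    rw [cast_descFactorial_eq n k (by omega)] at h2
    rw [eq_div_iff hfacne, h2]
    ring
  rw [show (1:ℝ) + (-lam)/n = 1 - lam/n from by ring, hpow, hprod, hchoose, div_pow]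
  ring

end Aux

/-- If `T₁, T₂, …` are i.i.d. `Exp(1)` random variables and `Mₙ⁽ᵐ⁾` denotes the `m`-th
largest among `T₁, …, Tₙ` (`m ≥ 1` fixed), then for every real `x`,
`P(Mₙ⁽ᵐ⁾ - log n ≤ x) → P(G_m ≥ e^(-x))` as `n → ∞`, where `G_m ~ Gamma(m)`; i.e.
`Mₙ⁽ᵐ⁾ - log n` converges in distribution to `-log G_m`. -/
theorem kth_largest_exponential_tendsto {Ω : Type*} [MeasurableSpace Ω] (μ : Measure Ω)
    [IsProbabilityMeasure μ]
    (m : ℕ) (hm : 1 ≤ m)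
    (T : ℕ → Ω → ℝ) (hT : ∀ i, Measurable (T i))
    (hlaw : ∀ i, Measure.map (T i) μ = expMeasure 1)
    (hindep : iIndepFun T μ)
    (x : ℝ) :
    Tendsto (fun n : ℕ =>
        (μ {ω | kthLargest (fun i : Fin n => T i ω) m - Real.log n ≤ x}).toReal)
      atTop (𝓝 ((gammaMeasure (m : ℝ) 1 (Set.Ici (Real.exp (-x)))).toReal)) := by
  classical
  set lam : ℝ := Real.exp (-x) with hlamdef
  have hlam : 0 < lam := Real.exp_pos _
  rw [gamma_tail m hm hlam]
  have hmain : Tendsto (fun n : ℕ => ∑ k ∈ Finset.range m,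
      (n.choose k : ℝ) * (lam/n)^k * (1-lam/n)^(n-k)) atTop
      (𝓝 (∑ k ∈ Finset.range m, Real.exp (-lam) * lam^k / k.factorial)) :=
    tendsto_finset_sum _ (fun k _ => binom_term_tendsto k hlam)
  refine Tendsto.congr' ?_ hmain
  filter_upwards [eventually_ge_atTop m, eventually_ge_atTop 1,
    (Real.tendsto_log_atTop.comp tendsto_natCast_atTop_atTop).eventually_ge_atTop (-x)]
    with n hnm hn1 hlog
  set y : ℝ := Real.log n + x with hy
  have hy0 : 0 ≤ y := by
    simp only [Function.comp] at hlog
    rw [hy]; linarith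
  have hn0 : (0:ℝ) < n := by
    have : 0 < n := by omega
    exact_mod_cast this
  -- exp(-y) = lam / n
  have hpr : Real.exp (-y) = lam / n := by
    rw [hy, neg_add, Real.exp_add, hlamdef]
    rw [Real.exp_neg, Real.exp_log hn0]
    ring
  -- event rewriting
  have hp : ∀ i, μ (T i ⁻¹' Set.Ioi y) = ENNReal.ofReal (Real.exp (-y)) := by
    intro i
    rw [← Measure.map_apply (hT i) measurableSet_Ioi, hlaw i, expMeasure_Ioi hy0]
  have hEvent : {ω | kthLargest (fun i : Fin n => T i ω) m - Real.log n ≤ x}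
      = ⋃ k ∈ Finset.range m,
          {ω | ((Finset.range n).filter fun i => y < T i ω).card = k} := by
    ext ω
    simp only [Set.mem_setOf_eq, Set.mem_iUnion, Finset.mem_range, exists_prop]
    rw [sub_le_iff_le_add, show (x + Real.log n) = y by rw [hy]; ring]
    rw [kthLargest_le_iff hm hnm]
    have hcards : (Finset.univ.filter fun i : Fin n => y < T i ω).card
        = ((Finset.range n).filter fun i => y < T i ω).card := by
      rw [Finset.card_filter, Finset.card_filter,
        Fin.sum_univ_eq_sum_range (fun i => if y < T i ω then 1 else 0) n]
    rw [hcards]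
    constructor
    · intro h
      exact ⟨_, by omega, rfl⟩
    · rintro ⟨k, hk, hEq⟩
      omega
  -- measurability of counting function
  have hcmeas : Measurable fun ω => ((Finset.range n).filter fun i => y < T i ω).card := by
    simp_rw [Finset.card_filter]
    exact Finset.measurable_sum _ (fun i _ =>
      Measurable.ite (measurableSet_lt measurable_const (hT i))
        measurable_const measurable_const)
  have hdisj : (Finset.range m : Set ℕ).PairwiseDisjoint
      (fun k => {ω | ((Finset.range n).filter fun i => y < T i ω).card = k}) := by
    intro a ha b hb hab
    refine Set.disjoint_left.mpr (fun ω hω hω' => hab ?_)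
    simp only [Set.mem_setOf_eq] at hω hω'
    rw [← hω, ← hω']
  rw [hEvent, measure_biUnion_finset hdisj
    (fun k _ => hcmeas (measurableSet_singleton k))]
  rw [Finset.sum_congr rfl (fun k _ => meas_count_eq T hT hindep y hp n k)]
  have hprle : Real.exp (-y) ≤ 1 := Real.exp_le_one_iff.mpr (neg_nonpos.mpr hy0)
  have hsub : (1:ℝ≥0∞) - ENNReal.ofReal (Real.exp (-y))
      = ENNReal.ofReal (1 - Real.exp (-y)) := by
    rw [← ENNReal.ofReal_one, ← ENNReal.ofReal_sub _ (Real.exp_pos _).le]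
  rw [ENNReal.toReal_sum (fun k _ => by
    apply ENNReal.mul_ne_top
    · exact ENNReal.mul_ne_top (ENNReal.natCast_ne_top _)
        (ENNReal.pow_ne_top ENNReal.ofReal_ne_top)
    · rw [hsub]
      exact ENNReal.pow_ne_top ENNReal.ofReal_ne_top)]
  refine Finset.sum_congr rfl (fun k _ => ?_)
  rw [hsub, ENNReal.toReal_mul, ENNReal.toReal_mul, ENNReal.toReal_pow, ENNReal.toReal_pow,
    ENNReal.toReal_ofReal (Real.exp_pos _).le,
    ENNReal.toReal_ofReal (by linarith), ENNReal.toReal_natCast, hpr]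
end

section
/- Let 0 < α < 1. The function g(x) = (sin(πα)/(πα)) · 1/(x² + 2cos(πα)x + 1) on (0,∞) is a probability density, and for every real s with -1 < s < 1, ∫_0^∞ x^s g(x) dx = sin(παs)/(α sin(πs)) (interpreted as 1 when s = 0). -/
open MeasureTheory Real Set Filter Topology

namespace LampertiAux

lemma quad_lb {c c₀ x : ℝ} (hc₀ : -1 < c₀) (hc₀1 : c₀ ≤ 1) (hc : c₀ ≤ c) (hx : 0 ≤ x) :
    (1 + c₀) / 2 * (1 + x ^ 2) ≤ x ^ 2 + 2 * c * x + 1 := by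
  nlinarith [sq_nonneg (x - 1), mul_nonneg hx (sub_nonneg.2 hc)]

lemma neg_one_lt_cos {θ : ℝ} (h0 : -π < θ) (hπ : θ < π) : -1 < Real.cos θ := by
  have h2 : Real.cos (θ/2) ≠ 0 :=
    ne_of_gt (Real.cos_pos_of_mem_Ioo ⟨by linarith, by linarith⟩)
  have h1 := Real.cos_sq (θ/2)
  rw [show 2*(θ/2) = θ by ring] at h1
  have h3 : 0 < Real.cos (θ/2) ^ 2 := by positivity
  nlinarith

lemma quad_pos {c x : ℝ} (hc : -1 < c) (hc1 : c ≤ 1) (hx : 0 ≤ x) :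
    0 < x ^ 2 + 2 * c * x + 1 := by
  refine lt_of_lt_of_le ?_ (quad_lb hc hc1 le_rfl hx)
  nlinarith [sq_nonneg x]

noncomputable def w (θ : ℝ) : ℂ := Complex.exp (-(θ:ℂ) * Complex.I)

lemma w_re (θ : ℝ) : (w θ).re = Real.cos θ := by
  simp [w, Complex.exp_re]

lemma w_im (θ : ℝ) : (w θ).im = -Real.sin θ := by
  simp [w, Complex.exp_im]

lemma w_abs (θ : ℝ) : ‖w θ‖ = 1 := by
  simp [w, Complex.norm_exp]

lemma w_ne_zero (θ : ℝ) : w θ ≠ 0 := Complex.exp_ne_zero _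

lemma normSq_x_w (θ x : ℝ) :
    Complex.normSq ((x:ℂ) + w θ) = x ^ 2 + 2 * Real.cos θ * x + 1 := by
  rw [Complex.normSq_apply]
  simp only [Complex.add_re, Complex.add_im, Complex.ofReal_re, Complex.ofReal_im,
    w_re, w_im, zero_add]
  nlinarith [Real.sin_sq_add_cos_sq θ]

lemma x_w_ne {θ x : ℝ} (hθ1 : -π < θ) (hθ2 : θ < π) (hx : 0 ≤ x) :
    (x:ℂ) + w θ ≠ 0 := by
  rw [← Complex.normSq_pos, normSq_x_w]
  exact quad_pos (neg_one_lt_cos hθ1 hθ2) (Real.cos_le_one θ) hx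

lemma abs_x_w_ge {c₀ θ x : ℝ} (hc₀ : -1 < c₀) (hc₀1 : c₀ ≤ 1) (hcos : c₀ ≤ Real.cos θ)
    (hx : 0 ≤ x) :
    (1 + c₀)/2 ≤ ‖(x:ℂ) + w θ‖ ∧
    (1 + c₀)/2 * x ≤ ‖(x:ℂ) + w θ‖ := by
  set m : ℝ := (1 + c₀)/2 with hm
  have hm0 : 0 < m := by rw [hm]; linarith
  have hm1 : m ≤ 1 := by rw [hm]; linarith
  have hq : m * (1 + x^2) ≤ Complex.normSq ((x:ℂ) + w θ) := by
    rw [normSq_x_w]; exact quad_lb hc₀ hc₀1 hcos hx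
  rw [Complex.norm_def]
  constructor
  · rw [Real.le_sqrt hm0.le (Complex.normSq_nonneg _)]
    nlinarith [sq_nonneg x]
  · rcases le_or_gt (m * x) 0 with h | h
    · exact le_trans h (Real.sqrt_nonneg _)
    · rw [Real.le_sqrt h.le (Complex.normSq_nonneg _)]
      nlinarith [sq_nonneg x]

lemma contOn_aux {θ : ℝ} (hθ1 : -π < θ) (hθ2 : θ < π) (t : ℝ) (n : ℕ) :
    ContinuousOn (fun x : ℝ => ((x ^ t : ℝ) : ℂ) * (((x:ℂ) + w θ) ^ n)⁻¹) (Ioi 0) := by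
  refine ContinuousOn.mul ?_ ?_
  · exact Complex.continuous_ofReal.comp_continuousOn
      (fun x hx => (Real.continuousAt_rpow_const x t (Or.inl (ne_of_gt hx))).continuousWithinAt)
  · refine ContinuousOn.inv₀ (by fun_prop) ?_
    exact fun x hx => pow_ne_zero n (x_w_ne hθ1 hθ2 (le_of_lt hx))

lemma integrableOn_Ioi_of_bounds {E : Type*} [NormedAddCommGroup E] {f : ℝ → E} {C a b : ℝ}
    (hf : ContinuousOn f (Ioi 0)) (ha : -1 < a) (hb : b < -1)
    (h1 : ∀ x : ℝ, 0 < x → x ≤ 1 → ‖f x‖ ≤ C * x ^ a)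
    (h2 : ∀ x : ℝ, 1 ≤ x → ‖f x‖ ≤ C * x ^ b) : IntegrableOn f (Ioi 0) := by
  have hIoc : IntegrableOn f (Ioc 0 1) := by
    have hg : IntegrableOn (fun x : ℝ => C * x ^ a) (Ioc 0 1) := by
      have := (intervalIntegral.intervalIntegrable_rpow' (a := 0) (b := 1) ha).const_mul C
      rwa [intervalIntegrable_iff_integrableOn_Ioc_of_le zero_le_one] at this
    refine Integrable.mono hg ((hf.mono Ioc_subset_Ioi_self).aestronglyMeasurable measurableSet_Ioc) ?_
    rw [ae_restrict_iff' measurableSet_Ioc]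
    filter_upwards with x hx
    refine (h1 x hx.1 hx.2).trans ?_
    have : (0:ℝ) ≤ C * x ^ a := le_trans (norm_nonneg _) (h1 x hx.1 hx.2)
    rw [Real.norm_eq_abs, _root_.abs_of_nonneg this]
  have hIoi : IntegrableOn f (Ioi 1) := by
    have hg : IntegrableOn (fun x : ℝ => C * x ^ b) (Ioi 1) :=
      (integrableOn_Ioi_rpow_of_lt hb zero_lt_one).const_mul C
    refine Integrable.mono hg ((hf.mono (Ioi_subset_Ioi zero_le_one)).aestronglyMeasurable measurableSet_Ioi) ?_
    rw [ae_restrict_iff' measurableSet_Ioi]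
    filter_upwards with x hx
    refine (h2 x (le_of_lt hx)).trans ?_
    have : (0:ℝ) ≤ C * x ^ b := le_trans (norm_nonneg _) (h2 x hx.le)
    rw [Real.norm_eq_abs, _root_.abs_of_nonneg this]
  have : IntegrableOn f (Ioc 0 1 ∪ Ioi 1) := hIoc.union hIoi
  rwa [Ioc_union_Ioi_eq_Ioi zero_le_one] at this

lemma norm_rpow_mul_inv_pow {θ x : ℝ} (hx : 0 < x) (t : ℝ) (n : ℕ) :
    ‖((x ^ t : ℝ) : ℂ) * (((x:ℂ) + w θ) ^ n)⁻¹‖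
      = x ^ t * (‖(x:ℂ) + w θ‖ ^ n)⁻¹ := by
  rw [norm_mul, norm_inv, norm_pow, Complex.norm_real, Real.norm_eq_abs,
    _root_.abs_of_nonneg (Real.rpow_nonneg hx.le t)]

lemma integrableOn_rpow_mul_inv_pow {θ : ℝ} (hθ1 : -π < θ) (hθ2 : θ < π)
    {t : ℝ} (ht : -1 < t) {n : ℕ} (hn : t - n < -1) :
    IntegrableOn (fun x : ℝ => ((x ^ t : ℝ) : ℂ) * (((x:ℂ) + w θ) ^ n)⁻¹) (Ioi 0) := by
  set c₀ : ℝ := Real.cos θ with hc₀def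
  have hc₀ : -1 < c₀ := neg_one_lt_cos hθ1 hθ2
  have hc₀1 : c₀ ≤ 1 := Real.cos_le_one θ
  set m : ℝ := (1 + c₀)/2 with hm
  have hm0 : 0 < m := by rw [hm]; linarith
  have hm1 : m ≤ 1 := by rw [hm]; linarith
  refine integrableOn_Ioi_of_bounds (C := (m ^ n)⁻¹) (contOn_aux hθ1 hθ2 t n) ht hn ?_ ?_
  · intro x hx hx1
    rw [norm_rpow_mul_inv_pow hx]
    have habs : m ≤ ‖(x:ℂ) + w θ‖ :=
      (abs_x_w_ge hc₀ hc₀1 le_rfl hx.le).1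
    have h2 : m ^ n ≤ ‖(x:ℂ) + w θ‖ ^ n :=
      pow_le_pow_left₀ hm0.le habs n
    rw [mul_comm ((m ^ n)⁻¹) (x ^ t)]
    refine mul_le_mul_of_nonneg_left ?_ (Real.rpow_nonneg hx.le t)
    exact inv_anti₀ (by positivity) h2
  · intro x hx
    have hx0 : (0:ℝ) < x := lt_of_lt_of_le one_pos hx
    rw [norm_rpow_mul_inv_pow hx0]
    have habs : m * x ≤ ‖(x:ℂ) + w θ‖ :=
      (abs_x_w_ge hc₀ hc₀1 le_rfl hx0.le).2
    have h2 : (m * x) ^ n ≤ ‖(x:ℂ) + w θ‖ ^ n :=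
      pow_le_pow_left₀ (by positivity) habs n
    have key : (‖(x:ℂ) + w θ‖ ^ n)⁻¹ ≤ (m ^ n)⁻¹ * (x ^ n)⁻¹ := by
      rw [← mul_inv, ← mul_pow]
      exact inv_anti₀ (by positivity) h2
    calc x ^ t * (‖(x:ℂ) + w θ‖ ^ n)⁻¹
        ≤ x ^ t * ((m ^ n)⁻¹ * (x ^ n)⁻¹) :=
          mul_le_mul_of_nonneg_left key (Real.rpow_nonneg hx0.le t)
      _ = (m ^ n)⁻¹ * x ^ (t - n) := by
          rw [Real.rpow_sub hx0, Real.rpow_natCast]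
          field_simp

noncomputable def F (s θ : ℝ) : ℂ :=
  ∫ x in Ioi (0:ℝ), ((x ^ s : ℝ) : ℂ) * ((x:ℂ) + w θ)⁻¹

section IBP

variable {s θ : ℝ} (hs1 : -1 < s) (hs0 : s < 0) (hθ1 : -π < θ) (hθ2 : θ < π)

include hs1 hs0 hθ1 hθ2

lemma L1 : IntegrableOn (fun x : ℝ => ((x ^ s : ℝ) : ℂ) * (((x:ℂ) + w θ) ^ 1)⁻¹) (Ioi 0) :=
  integrableOn_rpow_mul_inv_pow hθ1 hθ2 hs1 (by push_cast; linarith)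

lemma L2 : IntegrableOn (fun x : ℝ => ((x ^ s : ℝ) : ℂ) * (((x:ℂ) + w θ) ^ 2)⁻¹) (Ioi 0) :=
  integrableOn_rpow_mul_inv_pow hθ1 hθ2 hs1 (by push_cast; linarith)

lemma L3 : IntegrableOn (fun x : ℝ => ((x ^ (s+1) : ℝ) : ℂ) * (((x:ℂ) + w θ) ^ 2)⁻¹) (Ioi 0) :=
  integrableOn_rpow_mul_inv_pow hθ1 hθ2 (by linarith) (by push_cast; linarith)

lemma hasDeriv_g (x : ℝ) (hx : 0 < x) :
    HasDerivAt (fun y : ℝ => ((y ^ (s+1) : ℝ) : ℂ) * ((y:ℂ) + w θ)⁻¹)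
      (((s+1:ℝ):ℂ) * (((x ^ s : ℝ) : ℂ) * (((x:ℂ) + w θ) ^ 1)⁻¹)
        - ((x ^ (s+1) : ℝ) : ℂ) * (((x:ℂ) + w θ) ^ 2)⁻¹) x := by
  have hne : (x:ℂ) + w θ ≠ 0 := x_w_ne hθ1 hθ2 hx.le
  have hp : HasDerivAt (fun y : ℝ => ((y ^ (s+1) : ℝ) : ℂ)) (((s+1) * x ^ s : ℝ):ℂ) x := by
    have := Real.hasDerivAt_rpow_const (x := x) (p := s+1) (Or.inl hx.ne')
    rw [show s + 1 - 1 = s by ring] at this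
    exact this.ofReal_comp
  have hbase : HasDerivAt (fun y : ℝ => (y:ℂ) + w θ) 1 x := by
    simpa using (Complex.ofRealCLM.hasDerivAt (x := x)).add_const (w θ)
  have hq : HasDerivAt (fun y : ℝ => ((y:ℂ) + w θ)⁻¹) (-1 / ((x:ℂ) + w θ)^2) x :=
    by simpa [one_div] using (hasDerivAt_const x (1:ℂ)).fun_div hbase hne
  have := hp.mul hq
  refine this.congr_deriv ?_
  push_cast
  field_simp
  ring

lemma tendsto_g_top :
    Tendsto (fun y : ℝ => ((y ^ (s+1) : ℝ) : ℂ) * ((y:ℂ) + w θ)⁻¹) atTop (𝓝 0) := by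
  set c₀ : ℝ := Real.cos θ
  have hc₀ : -1 < c₀ := neg_one_lt_cos hθ1 hθ2
  set m : ℝ := (1 + c₀)/2 with hm
  have hm0 : 0 < m := by rw [hm]; linarith
  refine squeeze_zero_norm' (a := fun x : ℝ => m⁻¹ * x ^ s) ?_ ?_
  · filter_upwards [eventually_ge_atTop (1:ℝ)] with x hx
    have hx0 : (0:ℝ) < x := lt_of_lt_of_le one_pos hx
    have h := norm_rpow_mul_inv_pow (θ := θ) hx0 (s+1) 1
    simp only [pow_one] at h
    rw [h]
    have habs : m * x ≤ ‖(x:ℂ) + w θ‖ :=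
      (abs_x_w_ge hc₀ (Real.cos_le_one θ) le_rfl hx0.le).2
    have : (‖(x:ℂ) + w θ‖)⁻¹ ≤ (m * x)⁻¹ :=
      inv_anti₀ (by positivity) habs
    calc x ^ (s+1) * (‖(x:ℂ) + w θ‖)⁻¹
        ≤ x ^ (s+1) * (m * x)⁻¹ :=
          mul_le_mul_of_nonneg_left this (Real.rpow_nonneg hx0.le _)
      _ = m⁻¹ * x ^ s := by
          rw [Real.rpow_add_one hx0.ne']
          field_simp
  · have : Tendsto (fun x : ℝ => x ^ (-(-s))) atTop (𝓝 0) :=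
      tendsto_rpow_neg_atTop (by linarith)
    rw [neg_neg] at this
    simpa using this.const_mul m⁻¹

lemma cont_g_zero :
    ContinuousWithinAt (fun y : ℝ => ((y ^ (s+1) : ℝ) : ℂ) * ((y:ℂ) + w θ)⁻¹) (Ici 0) 0 := by
  have h1 : ContinuousAt (fun y : ℝ => ((y ^ (s+1) : ℝ) : ℂ)) 0 :=
    Complex.continuous_ofReal.continuousAt.comp
      (Real.continuousAt_rpow_const 0 (s+1) (Or.inr (by linarith)))
  have h2 : ContinuousAt (fun y : ℝ => ((y:ℂ) + w θ)⁻¹) 0 := by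
    refine ContinuousAt.inv₀ ((Complex.continuous_ofReal.continuousAt).add continuousAt_const) ?_
    simpa using x_w_ne hθ1 hθ2 (le_refl 0)
  exact (h1.mul h2).continuousWithinAt

lemma ibp :
    ∫ x in Ioi (0:ℝ), ((x ^ (s+1) : ℝ) : ℂ) * (((x:ℂ) + w θ) ^ 2)⁻¹
      = ((s+1:ℝ):ℂ) * F s θ := by
  have key := integral_Ioi_of_hasDerivAt_of_tendsto (a := 0)
    (f := fun y : ℝ => ((y ^ (s+1) : ℝ) : ℂ) * ((y:ℂ) + w θ)⁻¹)
    (f' := fun x : ℝ => ((s+1:ℝ):ℂ) * (((x ^ s : ℝ) : ℂ) * (((x:ℂ) + w θ) ^ 1)⁻¹)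
        - ((x ^ (s+1) : ℝ) : ℂ) * (((x:ℂ) + w θ) ^ 2)⁻¹)
    (cont_g_zero hs1 hs0 hθ1 hθ2)
    (fun x hx => hasDeriv_g hs1 hs0 hθ1 hθ2 x hx)
    (((L1 hs1 hs0 hθ1 hθ2).const_mul _).sub (L3 hs1 hs0 hθ1 hθ2))
    (tendsto_g_top hs1 hs0 hθ1 hθ2)
  have hzero : ((0:ℝ) ^ (s+1) : ℝ) = 0 := Real.zero_rpow (by linarith)
  rw [integral_sub ((L1 hs1 hs0 hθ1 hθ2).const_mul _) (L3 hs1 hs0 hθ1 hθ2)] at key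
  rw [integral_const_mul] at key
  have hF : ∫ x in Ioi (0:ℝ), ((x ^ s : ℝ) : ℂ) * (((x:ℂ) + w θ) ^ 1)⁻¹ = F s θ := by
    unfold F; simp_rw [pow_one]
  rw [hF] at key
  simp only [hzero, Complex.ofReal_zero, zero_mul, sub_zero] at key
  linear_combination -key

lemma int_sq :
    w θ * ∫ x in Ioi (0:ℝ), ((x ^ s : ℝ) : ℂ) * (((x:ℂ) + w θ) ^ 2)⁻¹
      = (-s : ℂ) * F s θ := by
  have hptwise : ∀ x ∈ Ioi (0:ℝ),
      ((x ^ s : ℝ) : ℂ) * (((x:ℂ) + w θ) ^ 1)⁻¹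
        = ((x ^ (s+1) : ℝ) : ℂ) * (((x:ℂ) + w θ) ^ 2)⁻¹
          + w θ * (((x ^ s : ℝ) : ℂ) * (((x:ℂ) + w θ) ^ 2)⁻¹) := by
    intro x hx
    have hx0 : (0:ℝ) < x := hx
    have hne : (x:ℂ) + w θ ≠ 0 := x_w_ne hθ1 hθ2 hx0.le
    rw [Real.rpow_add_one hx0.ne']
    push_cast
    field_simp
  have hI : ∫ x in Ioi (0:ℝ), ((x ^ s : ℝ) : ℂ) * (((x:ℂ) + w θ) ^ 1)⁻¹
      = (∫ x in Ioi (0:ℝ), ((x ^ (s+1) : ℝ) : ℂ) * (((x:ℂ) + w θ) ^ 2)⁻¹)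
        + w θ * ∫ x in Ioi (0:ℝ), ((x ^ s : ℝ) : ℂ) * (((x:ℂ) + w θ) ^ 2)⁻¹ := by
    rw [← integral_const_mul, ← integral_add (L3 hs1 hs0 hθ1 hθ2)
      ((L2 hs1 hs0 hθ1 hθ2).const_mul _)]
    exact setIntegral_congr_fun measurableSet_Ioi hptwise
  have hF : ∫ x in Ioi (0:ℝ), ((x ^ s : ℝ) : ℂ) * (((x:ℂ) + w θ) ^ 1)⁻¹ = F s θ := by
    unfold F; simp_rw [pow_one]
  rw [hF, ibp hs1 hs0 hθ1 hθ2] at hI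
  push_cast at hI ⊢
  linear_combination -hI

end IBP

lemma w_hasDeriv (t : ℝ) : HasDerivAt w (-Complex.I * w t) t := by
  have h1 : HasDerivAt (fun t : ℝ => -(t:ℂ) * Complex.I) (-Complex.I) t := by
    simpa using (Complex.ofRealCLM.hasDerivAt (x := t)).neg.mul_const Complex.I
  have h2 := h1.cexp
  unfold w
  convert h2 using 1
  ring

set_option maxHeartbeats 1000000 in
lemma F_hasDerivAt {s : ℝ} (hs1 : -1 < s) (hs0 : s < 0) {θ₀ : ℝ}
    (hθ1 : -π < θ₀) (hθ2 : θ₀ < π) :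
    HasDerivAt (F s) (-(Complex.I * s) * F s θ₀) θ₀ := by
  have habs : |θ₀| < π := abs_lt.2 ⟨hθ1, hθ2⟩
  set ε := (π - |θ₀|)/2 with hε
  have hε0 : 0 < ε := by rw [hε]; linarith
  set β := (π + |θ₀|)/2 with hβ
  have hβπ : β < π := by rw [hβ]; linarith
  have hβ0 : 0 ≤ β := by rw [hβ]; positivity
  set c₀ := Real.cos β with hc₀def
  have hc₀ : -1 < c₀ := neg_one_lt_cos (by linarith) hβπ
  have hc₀1 : c₀ ≤ 1 := Real.cos_le_one β
  set m := (1 + c₀)/2 with hm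
  have hm0 : 0 < m := by rw [hm]; linarith
  have hball : ∀ t ∈ Metric.ball θ₀ ε, c₀ ≤ Real.cos t ∧ -π < t ∧ t < π := by
    intro t ht
    rw [Metric.mem_ball, Real.dist_eq] at ht
    have h1 : |t| ≤ β := by
      have h2 := abs_sub_abs_le_abs_sub t θ₀
      rw [hβ]; rw [hε] at ht; linarith
    have h3 : Real.cos β ≤ Real.cos |t| :=
      Real.cos_le_cos_of_nonneg_of_le_pi (abs_nonneg t) hβπ.le h1
    rw [Real.cos_abs] at h3
    exact ⟨h3, (abs_lt.1 (lt_of_le_of_lt h1 hβπ)).1, (abs_lt.1 (lt_of_le_of_lt h1 hβπ)).2⟩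
  have hF_meas : ∀ᶠ t in 𝓝 θ₀, AEStronglyMeasurable
      (fun x : ℝ => ((x ^ s : ℝ) : ℂ) * ((x:ℂ) + w t)⁻¹) (volume.restrict (Ioi 0)) := by
    filter_upwards [Metric.ball_mem_nhds θ₀ hε0] with t ht
    obtain ⟨_, h1, h2⟩ := hball t ht
    have := contOn_aux h1 h2 s 1
    simp only [pow_one] at this
    exact this.aestronglyMeasurable measurableSet_Ioi
  have hF_int : Integrable (fun x : ℝ => ((x ^ s : ℝ) : ℂ) * ((x:ℂ) + w θ₀)⁻¹)
      (volume.restrict (Ioi 0)) := by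
    have := L1 hs1 hs0 hθ1 hθ2
    simp only [pow_one] at this
    exact this
  have hF'_meas : AEStronglyMeasurable
      (fun x : ℝ => (Complex.I * w θ₀) * (((x ^ s : ℝ) : ℂ) * (((x:ℂ) + w θ₀) ^ 2)⁻¹))
      (volume.restrict (Ioi 0)) :=
    (continuousOn_const.mul (contOn_aux hθ1 hθ2 s 2)).aestronglyMeasurable measurableSet_Ioi
  have h_bound : ∀ᵐ x ∂(volume.restrict (Ioi 0)), ∀ t ∈ Metric.ball θ₀ ε,
      ‖(Complex.I * w t) * (((x ^ s : ℝ) : ℂ) * (((x:ℂ) + w t) ^ 2)⁻¹)‖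
        ≤ x ^ s * (m * (1 + x ^ 2))⁻¹ := by
    rw [ae_restrict_iff' measurableSet_Ioi]
    refine ae_of_all _ (fun x hx t ht => ?_)
    have hx0 : (0:ℝ) < x := hx
    obtain ⟨hcos, h1, h2⟩ := hball t ht
    have hIw : ‖Complex.I * w t‖ = 1 := by
      rw [norm_mul, Complex.norm_I, w_abs, one_mul]
    rw [norm_mul, hIw, one_mul, norm_rpow_mul_inv_pow hx0 s 2, Complex.sq_norm, normSq_x_w]
    refine mul_le_mul_of_nonneg_left ?_ (Real.rpow_nonneg hx0.le s)
    refine inv_anti₀ (mul_pos hm0 (by positivity)) ?_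
    rw [hm]
    exact quad_lb hc₀ hc₀1 hcos hx0.le
  have bound_int : Integrable (fun x : ℝ => x ^ s * (m * (1 + x ^ 2))⁻¹)
      (volume.restrict (Ioi 0)) := by
    refine integrableOn_Ioi_of_bounds (C := m⁻¹) ?_ hs1 (by linarith : s - 2 < -1) ?_ ?_
    · refine ContinuousOn.mul ?_ ?_
      · exact fun x hx => (Real.continuousAt_rpow_const x s (Or.inl (ne_of_gt hx))).continuousWithinAt
      · refine ContinuousOn.inv₀ (by fun_prop) ?_
        intro x _
        have : (0:ℝ) < m * (1 + x ^ 2) := mul_pos hm0 (by positivity)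
        exact ne_of_gt this
    · intro x hx hx1
      have hb : (0:ℝ) < m * (1 + x ^ 2) := mul_pos hm0 (by positivity)
      rw [Real.norm_eq_abs, _root_.abs_of_nonneg
        (mul_nonneg (Real.rpow_nonneg hx.le s) (inv_nonneg.2 hb.le)), mul_comm (m⁻¹) (x ^ s)]
      refine mul_le_mul_of_nonneg_left ?_ (Real.rpow_nonneg hx.le s)
      exact inv_anti₀ hm0 (by nlinarith [sq_nonneg x])
    · intro x hx
      have hx0 : (0:ℝ) < x := lt_of_lt_of_le one_pos hx
      have hb : (0:ℝ) < m * (1 + x ^ 2) := mul_pos hm0 (by positivity)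
      rw [Real.norm_eq_abs, _root_.abs_of_nonneg
        (mul_nonneg (Real.rpow_nonneg hx0.le s) (inv_nonneg.2 hb.le))]
      have key : (m * (1 + x ^ 2))⁻¹ ≤ m⁻¹ * (x ^ 2)⁻¹ := by
        rw [← mul_inv]
        exact inv_anti₀ (by positivity) (by nlinarith [sq_nonneg x])
      calc x ^ s * (m * (1 + x ^ 2))⁻¹ ≤ x ^ s * (m⁻¹ * (x ^ 2)⁻¹) :=
            mul_le_mul_of_nonneg_left key (Real.rpow_nonneg hx0.le s)
        _ = m⁻¹ * x ^ (s - 2) := by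
            rw [Real.rpow_sub hx0, show (2:ℝ) = ((2:ℕ):ℝ) by norm_num, Real.rpow_natCast]
            field_simp
  have h_diff : ∀ᵐ x ∂(volume.restrict (Ioi 0)), ∀ t ∈ Metric.ball θ₀ ε,
      HasDerivAt (fun t : ℝ => ((x ^ s : ℝ) : ℂ) * ((x:ℂ) + w t)⁻¹)
        ((Complex.I * w t) * (((x ^ s : ℝ) : ℂ) * (((x:ℂ) + w t) ^ 2)⁻¹)) t := by
    rw [ae_restrict_iff' measurableSet_Ioi]
    refine ae_of_all _ (fun x hx t ht => ?_)
    have hx0 : (0:ℝ) < x := hx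
    obtain ⟨hcos, h1, h2⟩ := hball t ht
    have hne : (x:ℂ) + w t ≠ 0 := x_w_ne h1 h2 hx0.le
    have hb : HasDerivAt (fun t : ℝ => (x:ℂ) + w t) (-Complex.I * w t) t :=
      (w_hasDeriv t).const_add _
    have hinv := (hasDerivAt_const t (1:ℂ)).fun_div hb hne
    have hmul := hinv.const_mul ((x ^ s : ℝ) : ℂ)
    have hfun : (fun t : ℝ => ((x ^ s : ℝ) : ℂ) * (1 / ((x:ℂ) + w t)))
        = fun t : ℝ => ((x ^ s : ℝ) : ℂ) * ((x:ℂ) + w t)⁻¹ := by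
      funext y; rw [one_div]
    rw [hfun] at hmul
    refine hmul.congr_deriv ?_
    field_simp
    ring
  have main := hasDerivAt_integral_of_dominated_loc_of_deriv_le
    (μ := volume.restrict (Ioi 0)) (x₀ := θ₀) (Metric.ball_mem_nhds θ₀ hε0) hF_meas hF_int hF'_meas h_bound bound_int h_diff
  have heq : ∫ x in Ioi (0:ℝ),
      (Complex.I * w θ₀) * (((x ^ s : ℝ) : ℂ) * (((x:ℂ) + w θ₀) ^ 2)⁻¹)
      = -(Complex.I * s) * F s θ₀ := by
    rw [integral_const_mul]
    have h4 := int_sq hs1 hs0 hθ1 hθ2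
    push_cast at h4 ⊢
    linear_combination Complex.I * h4
  rw [heq] at main
  exact main.2

lemma integral_ofReal' {f : ℝ → ℝ} {μ : Measure ℝ} :
    ∫ x, ((f x : ℝ) : ℂ) ∂μ = ((∫ x, f x ∂μ : ℝ) : ℂ) :=
  integral_ofReal (𝕜 := ℂ)

lemma F_eq {s : ℝ} (hs1 : -1 < s) (hs0 : s < 0) {θ : ℝ} (h0 : 0 ≤ θ) (hπ : θ < π) :
    F s θ = Complex.exp (-(Complex.I * s * θ)) * F s 0 := by
  set H : ℝ → ℂ := fun t => Complex.exp (Complex.I * s * t) * F s t with hH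
  have hHd : ∀ t : ℝ, -π < t → t < π → HasDerivAt H 0 t := by
    intro t h1 h2
    have h3 : HasDerivAt (fun t : ℝ => Complex.I * (s:ℂ) * (t:ℂ)) (Complex.I * s) t := by
      simpa using (Complex.ofRealCLM.hasDerivAt (x := t)).const_mul (Complex.I * (s:ℂ))
    have he := h3.cexp
    have := he.mul (F_hasDerivAt hs1 hs0 h1 h2)
    rw [hH]
    refine this.congr_deriv ?_
    ring
  rcases eq_or_lt_of_le h0 with h | hlt
  · rw [← h]
    norm_num
  · have key := constant_of_has_deriv_right_zero (f := H) (a := 0) (b := θ)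
      (fun t ht => (hHd t (by linarith [ht.1]) (lt_of_le_of_lt ht.2 hπ)).continuousAt.continuousWithinAt)
      (fun t ht => (hHd t (by linarith [ht.1]) (lt_of_lt_of_le ht.2 hπ.le)).hasDerivWithinAt)
    have h2 := key θ (right_mem_Icc.2 h0)
    rw [hH] at h2
    simp only [Complex.ofReal_zero, mul_zero, Complex.exp_zero, one_mul] at h2
    rw [← h2, ← mul_assoc, ← Complex.exp_add,
      show -(Complex.I * s * θ) + Complex.I * s * θ = 0 by ring,
      Complex.exp_zero, one_mul]

lemma F_zero {s : ℝ} :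
    F s 0 = ((∫ x in Ioi (0:ℝ), x ^ s / (1 + x)) : ℝ) := by
  unfold F
  have hw0 : w 0 = 1 := by simp [w]
  simp_rw [hw0]
  rw [← integral_ofReal']
  refine setIntegral_congr_fun measurableSet_Ioi (fun x hx => ?_)
  have hx0 : (0:ℝ) < x := hx
  have hne : (1:ℝ) + x ≠ 0 := by linarith
  push_cast
  rw [div_eq_mul_inv]
  ring

lemma mellin_one_add {s : ℝ} (hs1 : -1 < s) (hs0 : s < 0) :
    ∫ x in Ioi (0:ℝ), x ^ s / (1 + x) = π / Real.sin (π * (s+1)) := by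
  have himg : (fun t : ℝ => t / (1 - t)) '' Ioo 0 1 = Ioi 0 := by
    ext y
    constructor
    · rintro ⟨t, ht, rfl⟩
      exact div_pos ht.1 (by linarith [ht.2])
    · intro hy
      have hy0 : (0:ℝ) < y := hy
      refine ⟨y / (1 + y), ⟨div_pos hy0 (by linarith), ?_⟩, ?_⟩
      · rw [div_lt_one (by linarith)]; linarith
      · have h1 : (0:ℝ) < 1 + y := by linarith
        field_simp
        ring
  have hderiv : ∀ t ∈ Ioo (0:ℝ) 1,
      HasDerivWithinAt (fun t : ℝ => t / (1 - t)) (((1 - t)^2)⁻¹) (Ioo 0 1) t := by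
    intro t ht
    have h1 : (1:ℝ) - t ≠ 0 := ne_of_gt (by linarith [ht.2] : (0:ℝ) < 1 - t)
    refine HasDerivAt.hasDerivWithinAt ?_
    have h := (hasDerivAt_id t).div ((hasDerivAt_id t).const_sub 1) h1
    refine h.congr_deriv ?_
    simp only [id_eq]
    field_simp
    ring
  have hinj : InjOn (fun t : ℝ => t / (1 - t)) (Ioo 0 1) := by
    intro a ha b hb h
    have h1 : (1:ℝ) - a ≠ 0 := ne_of_gt (by linarith [ha.2] : (0:ℝ) < 1 - a)
    have h2 : (1:ℝ) - b ≠ 0 := ne_of_gt (by linarith [hb.2] : (0:ℝ) < 1 - b)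
    field_simp at h
    linarith
  have himage := integral_image_eq_integral_abs_deriv_smul measurableSet_Ioo hderiv hinj
    (fun x : ℝ => x ^ s / (1 + x))
  rw [himg] at himage
  rw [himage]
  have heq : ∀ t ∈ Ioo (0:ℝ) 1,
      |((1 - t)^2)⁻¹| • ((t / (1 - t)) ^ s / (1 + t / (1 - t)))
        = t ^ s * (1 - t) ^ (-s - 1) := by
    intro t ht
    have h0 : (0:ℝ) < t := ht.1
    have h1 : (0:ℝ) < 1 - t := by linarith [ht.2]
    have h2 : 1 + t / (1 - t) = (1 - t)⁻¹ := by field_simp; ring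
    have h3 : (0:ℝ) < (1 - t) ^ s := Real.rpow_pos_of_pos h1 s
    rw [smul_eq_mul, _root_.abs_of_nonneg (inv_nonneg.2 (sq_nonneg _)), h2,
      Real.div_rpow h0.le h1.le, div_inv_eq_mul,
      show -s - 1 = -s + -1 by ring, Real.rpow_add h1, Real.rpow_neg h1.le,
      Real.rpow_neg_one]
    field_simp
  rw [setIntegral_congr_fun measurableSet_Ioo heq]
  have hbeta : Complex.betaIntegral ((s:ℂ)+1) (-(s:ℂ))
      = ((∫ t in Ioo (0:ℝ) 1, t ^ s * (1 - t) ^ (-s - 1) : ℝ) : ℂ) := by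
    unfold Complex.betaIntegral
    rw [intervalIntegral.integral_of_le zero_le_one, ← integral_Ioc_eq_integral_Ioo,
      ← integral_ofReal']
    refine setIntegral_congr_fun measurableSet_Ioc (fun t ht => ?_)
    have h0 : (0:ℝ) < t := ht.1
    have h1 : (0:ℝ) ≤ 1 - t := by linarith [ht.2]
    rw [Complex.ofReal_mul, Complex.ofReal_cpow h0.le, Complex.ofReal_cpow h1]
    push_cast
    ring_nf
  have hsin : Real.sin (π * (s+1)) ≠ 0 := by
    refine ne_of_gt (Real.sin_pos_of_pos_of_lt_pi ?_ ?_)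
    · have : (0:ℝ) < s + 1 := by linarith
      positivity
    · nlinarith [Real.pi_pos]
  have hgamma := Complex.Gamma_mul_Gamma_eq_betaIntegral (s := (s:ℂ)+1) (t := -(s:ℂ))
    (by rw [Complex.add_re, Complex.ofReal_re, Complex.one_re]; linarith)
    (by rw [Complex.neg_re, Complex.ofReal_re]; linarith)
  rw [show (s:ℂ) + 1 + -(s:ℂ) = 1 by ring, Complex.Gamma_one, one_mul] at hgamma
  have hrefl := Complex.Gamma_mul_Gamma_one_sub ((s:ℂ)+1)
  rw [show (1:ℂ) - ((s:ℂ)+1) = -(s:ℂ) by ring] at hrefl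
  have hB : Complex.betaIntegral ((s:ℂ)+1) (-(s:ℂ))
      = ((π / Real.sin (π * (s+1)) : ℝ) : ℂ) := by
    rw [← hgamma, hrefl, Complex.ofReal_div, Complex.ofReal_sin]
    push_cast
    ring_nf
  rw [hbeta] at hB
  exact_mod_cast hB

lemma integral_im' {f : ℝ → ℂ} {μ : Measure ℝ} (hf : Integrable f μ) :
    ∫ x, (f x).im ∂μ = (∫ x, f x ∂μ).im :=
  integral_im hf

lemma sin_pi_mul_ne {s : ℝ} (h1 : -1 < s) (h2 : s < 1) (h3 : s ≠ 0) :
    Real.sin (π * s) ≠ 0 := by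
  rcases lt_or_gt_of_ne h3 with h | h
  · refine ne_of_lt (Real.sin_neg_of_neg_of_neg_pi_lt ?_ ?_)
    · nlinarith [Real.pi_pos]
    · nlinarith [Real.pi_pos]
  · refine ne_of_gt (Real.sin_pos_of_pos_of_lt_pi ?_ ?_)
    · nlinarith [Real.pi_pos]
    · nlinarith [Real.pi_pos]

lemma moment_neg {s θ : ℝ} (hs1 : -1 < s) (hs0 : s < 0) (h0 : 0 < θ) (hπ : θ < π) :
    ∫ x in Ioi (0:ℝ), x ^ s * (1 / (x ^ 2 + 2 * Real.cos θ * x + 1))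
      = π * Real.sin (s * θ) / (Real.sin (π * s) * Real.sin θ) := by
  have hθ1 : -π < θ := by linarith [Real.pi_pos]
  have hsinθ : 0 < Real.sin θ := Real.sin_pos_of_pos_of_lt_pi h0 hπ
  have hsin1 : 0 < Real.sin (π * (s+1)) := by
    refine Real.sin_pos_of_pos_of_lt_pi ?_ ?_
    · have : (0:ℝ) < s + 1 := by linarith
      positivity
    · nlinarith [Real.pi_pos]
  have hsinπs : Real.sin (π * s) ≠ 0 := sin_pi_mul_ne hs1 (by linarith) (ne_of_lt hs0)
  -- value of F
  have hFval : F s θ = Complex.exp (-(Complex.I * s * θ))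
      * ((π / Real.sin (π * (s+1)) : ℝ) : ℂ) := by
    rw [F_eq hs1 hs0 h0.le hπ, F_zero, mellin_one_add hs1 hs0]
  -- imaginary part of RHS
  have hIm : (F s θ).im = -(π / Real.sin (π * (s+1))) * Real.sin (s * θ) := by
    rw [hFval, Complex.mul_im]
    have hre : ((π / Real.sin (π * (s+1)) : ℝ) : ℂ).re = π / Real.sin (π * (s+1)) :=
      Complex.ofReal_re _
    have him : ((π / Real.sin (π * (s+1)) : ℝ) : ℂ).im = 0 := Complex.ofReal_im _
    rw [hre, him, mul_zero, zero_add]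
    have hz : -(Complex.I * (s:ℂ) * (θ:ℂ)) = ((-(s * θ) : ℝ) : ℂ) * Complex.I := by
      push_cast; ring
    rw [hz]
    rw [Complex.exp_im]
    simp [Real.sin_neg]
    ring
  -- imaginary part via the integral
  have hint : Integrable (fun x : ℝ => ((x ^ s : ℝ) : ℂ) * ((x:ℂ) + w θ)⁻¹)
      (volume.restrict (Ioi 0)) := by
    have := L1 hs1 hs0 hθ1 hπ
    simpa [pow_one, IntegrableOn] using this
  have hIm2 : (F s θ).im
      = ∫ x in Ioi (0:ℝ), x ^ s * (Real.sin θ / (x ^ 2 + 2 * Real.cos θ * x + 1)) := by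
    rw [F, ← integral_im' hint]
    refine setIntegral_congr_fun measurableSet_Ioi (fun x hx => ?_)
    have hx0 : (0:ℝ) < x := hx
    rw [Complex.mul_im, Complex.ofReal_re, Complex.ofReal_im, zero_mul, add_zero,
      Complex.inv_im]
    congr 1
    rw [Complex.add_im, Complex.ofReal_im, w_im, zero_add, normSq_x_w, neg_neg]
  -- pull out the constant
  have hpull : ∫ x in Ioi (0:ℝ), x ^ s * (Real.sin θ / (x ^ 2 + 2 * Real.cos θ * x + 1))
      = Real.sin θ * ∫ x in Ioi (0:ℝ), x ^ s * (1 / (x ^ 2 + 2 * Real.cos θ * x + 1)) := by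
    rw [← integral_const_mul]
    refine setIntegral_congr_fun measurableSet_Ioi (fun x hx => ?_)
    ring
  have hkey : Real.sin θ * ∫ x in Ioi (0:ℝ), x ^ s * (1 / (x ^ 2 + 2 * Real.cos θ * x + 1))
      = -(π / Real.sin (π * (s+1))) * Real.sin (s * θ) := by
    rw [← hpull, ← hIm2, hIm]
  have hsin_shift : Real.sin (π * (s+1)) = -Real.sin (π * s) := by
    rw [show π * (s+1) = π * s + π by ring, Real.sin_add, Real.sin_pi, Real.cos_pi]
    ring
  rw [hsin_shift] at hkey
  have hres := hkey
  field_simp at hres ⊢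
  nlinarith [hres]

lemma moment_reflect {s c : ℝ} (hc : -1 < c) (hc1 : c ≤ 1) :
    ∫ x in Ioi (0:ℝ), x ^ s * (1 / (x ^ 2 + 2 * c * x + 1))
      = ∫ x in Ioi (0:ℝ), x ^ (-s) * (1 / (x ^ 2 + 2 * c * x + 1)) := by
  have key := integral_comp_rpow_Ioi
    (g := fun y : ℝ => y ^ (-s) * (1 / (y ^ 2 + 2 * c * y + 1))) (p := -1)
    (by norm_num)
  rw [← key]
  refine setIntegral_congr_fun measurableSet_Ioi (fun x hx => ?_)
  have hx0 : (0:ℝ) < x := hx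
  have hxinv : x ^ (-1:ℝ) = x⁻¹ := Real.rpow_neg_one x
  have hq : (0:ℝ) < x ^ 2 + 2 * c * x + 1 := quad_pos hc hc1 hx0.le
  have h1 : (x⁻¹) ^ (-s) = x ^ s := by
    rw [Real.inv_rpow hx0.le, Real.rpow_neg hx0.le, inv_inv]
  have h2 : x ^ (-1-1 : ℝ) = (x ^ 2)⁻¹ := by
    rw [show (-1-1:ℝ) = -(2:ℕ) by norm_num, Real.rpow_neg hx0.le, Real.rpow_natCast]
  rw [smul_eq_mul, hxinv]
  beta_reduce
  rw [h1, h2, show |(-1:ℝ)| = 1 by norm_num, one_mul,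
    show x⁻¹ ^ 2 + 2 * c * x⁻¹ + 1 = (x ^ 2 + 2 * c * x + 1) / x ^ 2 by field_simp; ring,
    one_div_div]
  field_simp

lemma integrable_inv_quad {c : ℝ} (hc : -1 < c) (hc1 : c ≤ 1) :
    IntegrableOn (fun x : ℝ => 1 / (x ^ 2 + 2 * c * x + 1)) (Ioi 0) := by
  refine integrableOn_Ioi_of_bounds (C := 2 / (1 + c)) ?_ (by norm_num : (-1:ℝ) < 0)
    (by norm_num : (-2:ℝ) < -1) ?_ ?_
  · refine ContinuousOn.div continuousOn_const (by fun_prop) ?_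
    exact fun x hx => ne_of_gt (quad_pos hc hc1 (le_of_lt hx))
  · intro x hx hx1
    rw [Real.rpow_zero, mul_one, Real.norm_eq_abs,
      _root_.abs_of_nonneg (le_of_lt (one_div_pos.2 (quad_pos hc hc1 hx.le)))]
    rw [div_le_div_iff₀ (quad_pos hc hc1 hx.le) (by linarith)]
    nlinarith [quad_lb hc hc1 le_rfl hx.le, sq_nonneg x]
  · intro x hx
    have hx0 : (0:ℝ) < x := lt_of_lt_of_le one_pos hx
    rw [Real.norm_eq_abs,
      _root_.abs_of_nonneg (le_of_lt (one_div_pos.2 (quad_pos hc hc1 hx0.le)))]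
    have hrw : x ^ (-2 : ℝ) = (x ^ 2)⁻¹ := by
      rw [show (-2:ℝ) = -(2:ℕ) by norm_num, Real.rpow_neg hx0.le, Real.rpow_natCast]
    have hle : (1 + c)/2 * x ^ 2 ≤ x ^ 2 + 2 * c * x + 1 := by
      calc (1 + c)/2 * x ^ 2 ≤ (1 + c)/2 * (1 + x ^ 2) := by nlinarith
        _ ≤ x ^ 2 + 2 * c * x + 1 := quad_lb hc hc1 le_rfl hx0.le
    have hpos2 : (0:ℝ) < (1 + c)/2 * x ^ 2 := mul_pos (by linarith) (pow_pos hx0 2)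
    calc 1 / (x ^ 2 + 2*c*x + 1) ≤ 1 / ((1 + c)/2 * x ^ 2) :=
          one_div_le_one_div_of_le hpos2 hle
      _ = 2/(1 + c) * x ^ (-2:ℝ) := by rw [hrw]; field_simp
      
lemma integral_inv_quad {θ : ℝ} (h0 : 0 < θ) (hπ : θ < π) :
    ∫ x in Ioi (0:ℝ), 1 / (x ^ 2 + 2 * Real.cos θ * x + 1) = θ / Real.sin θ := by
  have hs : 0 < Real.sin θ := Real.sin_pos_of_pos_of_lt_pi h0 hπ
  have hc : -1 < Real.cos θ := neg_one_lt_cos (by linarith) hπ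
  set c := Real.cos θ with hcdef
  have hderiv : ∀ x : ℝ,
      HasDerivAt (fun x : ℝ => Real.arctan ((x + c) / Real.sin θ) / Real.sin θ)
        (1 / (x ^ 2 + 2 * c * x + 1)) x := by
    intro x
    have h1 : HasDerivAt (fun x : ℝ => (x + c) / Real.sin θ) (1 / Real.sin θ) x := by
      simpa using ((hasDerivAt_id x).add_const c).div_const (Real.sin θ)
    have h2 := (Real.hasDerivAt_arctan ((x + c) / Real.sin θ)).comp x h1
    have h3 := h2.div_const (Real.sin θ)
    refine h3.congr_deriv ?_
    have hq : x ^ 2 + 2 * c * x + 1 ≠ 0 := by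
      have : x ^ 2 + 2*c*x + 1 = (x + c)^2 + Real.sin θ ^ 2 := by
        nlinarith [Real.sin_sq_add_cos_sq θ]
      rw [this]; positivity
    field_simp
    have hq2 : x * (x + c * 2) + 1 = Real.sin θ ^ 2 + (x + c) ^ 2 := by
      nlinarith [Real.sin_sq_add_cos_sq θ]
    rw [hq2, div_self (ne_of_gt (by nlinarith [sq_nonneg (x + c), pow_pos hs 2]))]
  have htd : Tendsto (fun x : ℝ => Real.arctan ((x + c) / Real.sin θ) / Real.sin θ)
      atTop (𝓝 ((π/2) / Real.sin θ)) := by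
    refine Tendsto.div_const ?_ _
    refine (Real.tendsto_arctan_atTop.mono_right nhdsWithin_le_nhds).comp ?_
    exact (tendsto_atTop_add_const_right _ c tendsto_id).atTop_div_const hs
  have hcont : ContinuousWithinAt
      (fun x : ℝ => Real.arctan ((x + c) / Real.sin θ) / Real.sin θ) (Ici 0) 0 :=
    ((hderiv 0).continuousAt.continuousWithinAt)
  have key := integral_Ioi_of_hasDerivAt_of_tendsto hcont (fun x _ => hderiv x)
    (integrable_inv_quad hc (Real.cos_le_one θ)) htd
  rw [key]
  have harc : Real.arctan ((0 + c) / Real.sin θ) = π/2 - θ := by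
    rw [zero_add, hcdef, show Real.cos θ / Real.sin θ
        = Real.tan (π/2 - θ) by rw [Real.tan_eq_sin_div_cos,
          Real.sin_pi_div_two_sub, Real.cos_pi_div_two_sub]]
    exact Real.arctan_tan (by linarith) (by linarith)
  rw [harc]
  field_simp
  ring


end LampertiAux

open LampertiAux

/-- For `0 < α < 1`, the Lamperti density
`g(x) = (sin(πα)/(πα)) / (x² + 2cos(πα)x + 1)` on `(0,∞)` is a probability density, and
for every real `-1 < s < 1` its `s`-th moment is `sin(παs)/(α sin(πs))` (equal to `1` when
`s = 0`). -/
theorem lamperti_density_moments (α : ℝ) (hα₁ : 0 < α) (hα₂ : α < 1) :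
    (∀ x ∈ Ioi (0 : ℝ),
        0 ≤ Real.sin (π * α) / (π * α) * (1 / (x ^ 2 + 2 * Real.cos (π * α) * x + 1))) ∧
    (∫ x in Ioi (0 : ℝ),
        Real.sin (π * α) / (π * α) * (1 / (x ^ 2 + 2 * Real.cos (π * α) * x + 1)) = 1) ∧
    ∀ s : ℝ, -1 < s → s < 1 → s ≠ 0 →
      ∫ x in Ioi (0 : ℝ),
          x ^ s * (Real.sin (π * α) / (π * α) * (1 / (x ^ 2 + 2 * Real.cos (π * α) * x + 1))) =
        Real.sin (π * α * s) / (α * Real.sin (π * s)) := by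
  have hπ := Real.pi_pos
  set θ := π * α with hθdef
  have hθ0 : 0 < θ := by rw [hθdef]; positivity
  have hθπ : θ < π := by rw [hθdef]; nlinarith
  have hθ1 : -π < θ := by linarith
  have hsinθ : 0 < Real.sin θ := Real.sin_pos_of_pos_of_lt_pi hθ0 hθπ
  have hc : -1 < Real.cos θ := neg_one_lt_cos hθ1 hθπ
  have hc1 : Real.cos θ ≤ 1 := Real.cos_le_one θ
  refine ⟨?_, ?_, ?_⟩
  · intro x hx
    have hx0 : (0:ℝ) < x := hx
    have hq : 0 < x ^ 2 + 2 * Real.cos θ * x + 1 := quad_pos hc hc1 hx0.le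
    have h1 : 0 ≤ Real.sin θ / θ := div_nonneg hsinθ.le hθ0.le
    exact mul_nonneg h1 (by positivity)
  · rw [integral_const_mul, integral_inv_quad hθ0 hθπ]
    field_simp
  · intro s hs1 hs2 hs0
    have hsinπs : Real.sin (π * s) ≠ 0 := sin_pi_mul_ne hs1 hs2 hs0
    have hpull : ∫ x in Ioi (0:ℝ),
        x ^ s * (Real.sin θ / θ * (1 / (x ^ 2 + 2 * Real.cos θ * x + 1)))
        = Real.sin θ / θ * ∫ x in Ioi (0:ℝ),
            x ^ s * (1 / (x ^ 2 + 2 * Real.cos θ * x + 1)) := by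
      rw [← integral_const_mul]
      refine setIntegral_congr_fun measurableSet_Ioi (fun x hx => ?_)
      ring
    rw [hpull]
    have hJ : ∫ x in Ioi (0:ℝ), x ^ s * (1 / (x ^ 2 + 2 * Real.cos θ * x + 1))
        = π * Real.sin (s * θ) / (Real.sin (π * s) * Real.sin θ) := by
      rcases lt_or_gt_of_ne hs0 with h | h
      · exact moment_neg hs1 h hθ0 hθπ
      · rw [moment_reflect hc hc1, moment_neg (by linarith) (by linarith) hθ0 hθπ]
        rw [show -s * θ = -(s * θ) by ring, show π * -s = -(π * s) by ring,
          Real.sin_neg, Real.sin_neg]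
        rw [neg_mul, mul_neg, neg_div, div_neg, neg_neg]
    rw [hJ]
    rw [show s * θ = π * α * s by rw [hθdef]; ring]
    field_simp
    ring
end
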